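/- Every Rota-Baxter operator of weight 0 on the Virasoro Lie conformal algebra Vir = C[∂]L with [L_λ L] = (∂ + 2λ)L is trivial, i.e. if T: Vir → Vir is a C[∂]-module homomorphism with [T(a)_λ T(b)] = T([a_λ T(b)]) + T([T(a)_λ b]) for all a, b, then T = 0. -/

import Mathlib

open Finsupp

noncomputable section

/-- Coefficient of `λ^k` of the substitution `μ ↦ -λ-∂` applied to the polynomial
`Σₙ μ^n • (f n)` with coefficients in `A` (with `∂` acting on the coefficients). -/
def csubst {A : Type} [AddCommGroup A] [Module ℂ A]
    (D : Module.End ℂ A) (f : ℕ →₀ A) (k : ℕ) : A :=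
  f.sum fun n c => ((-1 : ℂ) ^ n * (n.choose k : ℂ)) • (D ^ (n - k)) c

/-- Coefficient of `λ^n μ^m` of `(a_λ b)_{λ+μ} c`, for a λ-product `m₁` on `A`
and a λ-action `m₂` of `A` on `V`. -/
def comp2 {A V : Type} [AddCommGroup A] [Module ℂ A] [AddCommGroup V] [Module ℂ V]
    (m₁ : A →ₗ[ℂ] A →ₗ[ℂ] (ℕ →₀ A)) (m₂ : A →ₗ[ℂ] V →ₗ[ℂ] (ℕ →₀ V))
    (a b : A) (c : V) (n m : ℕ) : V :=
  ∑ i ∈ Finset.range (n + 1),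
    (((m + n - i).choose (n - i) : ℕ) : ℂ) • m₂ (m₁ a b i) c (m + n - i)

/-- A conformal algebra: a `ℂ[∂]`-module with a sesquilinear λ-product,
encoded coefficientwise: `mul a b n` is the coefficient of `λ^n` in `a_λ b`. -/
structure ConfAlg (A : Type) [AddCommGroup A] [Module ℂ A] where
  D : Module.End ℂ A
  mul : A →ₗ[ℂ] A →ₗ[ℂ] (ℕ →₀ A)
  sesq_left_zero : ∀ a b, mul (D a) b 0 = 0
  sesq_left : ∀ a b n, mul (D a) b (n + 1) = - mul a b n
  sesq_right_zero : ∀ a b, mul a (D b) 0 = D (mul a b 0)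
  sesq_right : ∀ a b n, mul a (D b) (n + 1) = D (mul a b (n + 1)) + mul a b n

/-- A Lie conformal algebra: skew-symmetry `[a_λ b] = -[b_{-λ-∂} a]` and the
Jacobi identity `[a_λ[b_μ c]] = [[a_λ b]_{λ+μ} c] + [b_μ[a_λ c]]`, coefficientwise. -/
structure LieConfAlg (A : Type) [AddCommGroup A] [Module ℂ A] extends ConfAlg A where
  skew : ∀ a b k, mul a b k = - csubst D (mul b a) k
  jacobi : ∀ a b c n m,
    mul a (mul b c m) n = comp2 mul mul a b c n m + mul b (mul a c n) m

/-- A left-symmetric conformal algebra: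
`(a_λ b)_{λ+μ} c - a_λ(b_μ c) = (b_μ a)_{λ+μ} c - b_μ(a_λ c)`, coefficientwise. -/
structure LSConfAlg (A : Type) [AddCommGroup A] [Module ℂ A] extends ConfAlg A where
  lsym : ∀ a b c n m,
    comp2 mul mul a b c n m - mul a (mul b c m) n
      = comp2 mul mul b a c m n - mul b (mul a c n) m


open Polynomial


abbrev PP := Polynomial (Polynomial ℂ)

def emb : (ℕ →₀ ℂ) →ₗ[ℂ] Polynomial ℂ :=
  Finsupp.lsum ℂ (fun n => Polynomial.monomial n)

@[simp] lemma emb_single (n : ℕ) (c : ℂ) : emb (single n c) = monomial n c := by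
  simp [emb]

lemma emb_coeff (f : ℕ →₀ ℂ) (n : ℕ) : (emb f).coeff n = f n := by
  induction f using Finsupp.induction_linear with
  | zero => simp
  | add f g hf hg => simp [hf, hg]
  | single k c => rw [emb_single, coeff_monomial, Finsupp.single_apply]

lemma emb_inj : Function.Injective emb := by
  intro f g h
  ext n
  rw [← emb_coeff, ← emb_coeff, h]

def plift : (ℕ →₀ (ℕ →₀ ℂ)) →ₗ[ℂ] PP :=
  Finsupp.lsum ℂ (fun k =>
    ((Polynomial.monomial k : Polynomial ℂ →ₗ[Polynomial ℂ] PP).restrictScalars ℂ).comp emb)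

@[simp] lemma plift_single (k : ℕ) (c : ℕ →₀ ℂ) :
    plift (single k c) = monomial k (emb c) := by simp [plift]

lemma plift_coeff (F : ℕ →₀ (ℕ →₀ ℂ)) (k : ℕ) : (plift F).coeff k = emb (F k) := by
  induction F using Finsupp.induction_linear with
  | zero => simp
  | add f g hf hg => simp [hf, hg]
  | single j c =>
      simp only [plift_single, coeff_monomial, Finsupp.single_apply]
      split_ifs <;> simp

section
variable (L : LieConfAlg (ℕ →₀ ℂ))
    (hD : ∀ (n : ℕ) (c : ℂ), L.D (Finsupp.single n c) = Finsupp.single (n + 1) c)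

include hD in
lemma emb_D (a : ℕ →₀ ℂ) : emb (L.D a) = X * emb a := by
  induction a using Finsupp.induction_linear with
  | zero => simp
  | add f g hf hg => rw [map_add, map_add, hf, hg, map_add, mul_add]
  | single n c => rw [hD, emb_single, emb_single, X_mul_monomial]

lemma Bp_Dleft (a b : ℕ →₀ ℂ) :
    plift (L.mul (L.D a) b) = -X * plift (L.mul a b) := by
  refine Polynomial.ext fun k => ?_
  rw [plift_coeff]
  cases k with
  | zero => simp [L.sesq_left_zero]
  | succ n =>
      rw [neg_mul (α := PP), coeff_neg, coeff_X_mul, plift_coeff, L.sesq_left, map_neg]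

include hD in
lemma Bp_Dright (a b : ℕ →₀ ℂ) :
    plift (L.mul a (L.D b)) = ((X : PP) + C Polynomial.X) * plift (L.mul a b) := by
  refine Polynomial.ext fun k => ?_
  rw [plift_coeff, add_mul, coeff_add, coeff_C_mul]
  cases k with
  | zero =>
      rw [L.sesq_right_zero, coeff_X_mul_zero, plift_coeff, emb_D L hD, zero_add]
  | succ n =>
      rw [coeff_X_mul, plift_coeff, plift_coeff, L.sesq_right, map_add,
        emb_D L hD, add_comm]

include hD in
lemma key_left (n : ℕ) (b : ℕ →₀ ℂ) :
    plift (L.mul (Finsupp.single n (1:ℂ)) b)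
      = (-(X:PP))^n * plift (L.mul (Finsupp.single 0 1) b) := by
  induction n with
  | zero => simp
  | succ m ih =>
      rw [show (Finsupp.single (m+1) (1:ℂ)) = L.D (Finsupp.single m 1) from (hD m 1).symm,
        Bp_Dleft L, ih, pow_succ]
      ring

include hD in
lemma key_right (m : ℕ) (a : ℕ →₀ ℂ) :
    plift (L.mul a (Finsupp.single m (1:ℂ)))
      = ((X:PP) + C Polynomial.X)^m * plift (L.mul a (Finsupp.single 0 1)) := by
  induction m with
  | zero => simp
  | succ k ih =>
      rw [show (Finsupp.single (k+1) (1:ℂ)) = L.D (Finsupp.single k 1) from (hD k 1).symm,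
        Bp_Dright L hD, ih, pow_succ]
      ring

include hD in
lemma key_ab (a b : ℕ →₀ ℂ) :
    plift (L.mul a b)
      = aeval (-(X:PP)) (emb a) * aeval ((X:PP) + C Polynomial.X) (emb b)
          * plift (L.mul (Finsupp.single 0 1) (Finsupp.single 0 1)) := by
  induction a using Finsupp.induction_linear with
  | zero => simp
  | add f g hf hg =>
      rw [map_add, LinearMap.add_apply, map_add, hf, hg, map_add, map_add, add_mul, add_mul]
  | single n c =>
    induction b using Finsupp.induction_linear with
    | zero => simp
    | add f g hf hg =>
        simp only [map_add, LinearMap.add_apply]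
        rw [hf, hg]; ring
    | single m d =>
        have h1 : (Finsupp.single n c : ℕ →₀ ℂ) = c • Finsupp.single n 1 := by
          rw [Finsupp.smul_single, smul_eq_mul, mul_one]
        have h2 : (Finsupp.single m d : ℕ →₀ ℂ) = d • Finsupp.single m 1 := by
          rw [Finsupp.smul_single, smul_eq_mul, mul_one]
        rw [h1, h2]
        simp only [map_smul, LinearMap.smul_apply]
        rw [key_left L hD, key_right L hD, emb_single, emb_single,
          aeval_monomial, aeval_monomial]
        simp only [Algebra.smul_def, map_one, one_pow]
        ring
end

/-- every Rota-Baxter operator of weight `0` on the Virasoro Lie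
conformal algebra `Vir = ℂ[∂]L` (modelled as `ℕ →₀ ℂ` with `L = single 0 1` and
`[L_λ L] = (∂ + 2λ)L`) is trivial. -/
theorem virasoro_rota_baxter_trivial
    (L : LieConfAlg (ℕ →₀ ℂ))
    (hD : ∀ (n : ℕ) (c : ℂ), L.D (Finsupp.single n c) = Finsupp.single (n + 1) c)
    (hmul0 : L.mul (Finsupp.single 0 1) (Finsupp.single 0 1) 0
        = Finsupp.single 1 (1 : ℂ))
    (hmul1 : L.mul (Finsupp.single 0 1) (Finsupp.single 0 1) 1
        = Finsupp.single 0 (2 : ℂ))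
    (hmul2 : ∀ n : ℕ, L.mul (Finsupp.single 0 1) (Finsupp.single 0 1) (n + 2) = 0)
    (T : (ℕ →₀ ℂ) →ₗ[ℂ] (ℕ →₀ ℂ))
    (hTD : ∀ p, T (L.D p) = L.D (T p))
    (hRB : ∀ a b k, L.mul (T a) (T b) k
      = T (L.mul a (T b) k) + T (L.mul (T a) b k)) :
    T = 0 := by
  classical
  set l0 : ℕ →₀ ℂ := Finsupp.single 0 1 with hl0
  set p : Polynomial ℂ := emb (T l0) with hp
  have hTn : ∀ n : ℕ, emb (T (Finsupp.single n 1)) = Polynomial.X ^ n * p := by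
    intro n
    induction n with
    | zero => simp [hp, hl0]
    | succ m ih => rw [← hD m 1, hTD, emb_D L hD, ih, pow_succ]; ring
  have hembT : ∀ a, emb (T a) = p * emb a := by
    intro a
    induction a using Finsupp.induction_linear with
    | zero => simp
    | add f g hf hg => rw [map_add, map_add, hf, hg, map_add, mul_add]
    | single n c =>
        have h1 : (Finsupp.single n c : ℕ →₀ ℂ) = c • Finsupp.single n 1 := by
          rw [Finsupp.smul_single, smul_eq_mul, mul_one]
        rw [h1, map_smul, map_smul, hTn, map_smul, emb_single,
          ← Polynomial.X_pow_eq_monomial]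
        simp only [Algebra.smul_def]
        ring
  have hembl0 : emb l0 = 1 := by
    rw [hl0, emb_single, ← Polynomial.X_pow_eq_monomial, pow_zero]
  have hW0 : plift (L.mul l0 l0) ≠ 0 := by
    intro h
    have h0 := plift_coeff (L.mul l0 l0) 0
    rw [h, hmul0, emb_single] at h0
    have : (Polynomial.monomial 1 (1 : ℂ)) = 0 := by rw [← h0]; simp
    rw [← Polynomial.X_pow_eq_monomial, pow_one] at this
    exact Polynomial.X_ne_zero this
  have hBB : plift (L.mul (T l0) (T l0))
      = Polynomial.C p * (plift (L.mul l0 (T l0)) + plift (L.mul (T l0) l0)) := by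
    refine Polynomial.ext fun k => ?_
    rw [plift_coeff, hRB, map_add, Polynomial.coeff_C_mul, Polynomial.coeff_add,
      plift_coeff, plift_coeff, hembT, hembT, mul_add]
  rw [key_ab L hD (T l0) (T l0), key_ab L hD l0 (T l0), key_ab L hD (T l0) l0,
    hembl0, map_one, map_one, ← hp] at hBB
  have hA : Polynomial.aeval (-(X : PP)) p * Polynomial.aeval ((X : PP) + C Polynomial.X) p
      = Polynomial.C p * (Polynomial.aeval ((X : PP) + C Polynomial.X) p
          + Polynomial.aeval (-(X : PP)) p) := by
    apply mul_right_cancel₀ hW0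
    linear_combination hBB
  have hev : ∀ u v : ℂ, p.eval u * p.eval v = p.eval (u + v) * (p.eval v + p.eval u) := by
    intro u v
    set φ : PP →+* ℂ :=
      Polynomial.eval₂RingHom (Polynomial.evalRingHom (u + v)) (-u) with hφ
    have hcomp : φ.comp (algebraMap ℂ PP) = RingHom.id ℂ := by
      ext c
      simp [hφ, Polynomial.algebraMap_apply]
    have hφaeval : ∀ (x : PP) (q : Polynomial ℂ),
        φ (Polynomial.aeval x q) = q.eval (φ x) := by
      intro x q
      rw [Polynomial.aeval_def, Polynomial.hom_eval₂, hcomp]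
      rfl
    have hφ1 : φ (-(X : PP)) = u := by simp [hφ]
    have hφ2 : φ ((X : PP) + C Polynomial.X) = v := by simp [hφ]
    have := congrArg φ hA
    rw [map_mul, map_mul, map_add, hφaeval, hφaeval, hφ1, hφ2] at this
    simpa [map_mul, map_add, hφaeval, hφ1, hφ2, hφ, Polynomial.coeff_C] using this
  have hp0 : p = 0 := by
    by_contra hne
    have hq : p * p = (Polynomial.C 2 * p.comp (Polynomial.C 2 * Polynomial.X)) * p := by
      apply Polynomial.funext
      intro x
      have h := hev x x
      rw [show x + x = 2 * x by ring] at h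
      simp only [Polynomial.eval_mul, Polynomial.eval_comp, Polynomial.eval_C,
        Polynomial.eval_X]
      linear_combination h
    have hpq : p = Polynomial.C 2 * p.comp (Polynomial.C 2 * Polynomial.X) :=
      mul_right_cancel₀ hne hq
    have hdeg : (Polynomial.C (2:ℂ) * Polynomial.X).natDegree = 1 :=
      Polynomial.natDegree_C_mul_X 2 two_ne_zero
    have hlc := congrArg Polynomial.leadingCoeff hpq
    rw [Polynomial.leadingCoeff_mul, Polynomial.leadingCoeff_C,
      Polynomial.leadingCoeff_comp (by rw [hdeg]; exact one_ne_zero),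
      Polynomial.leadingCoeff_mul, Polynomial.leadingCoeff_C,
      Polynomial.leadingCoeff_X, mul_one] at hlc
    have hlcne : p.leadingCoeff ≠ 0 := Polynomial.leadingCoeff_ne_zero.mpr hne
    have h1 : (1 : ℂ) = 2 * 2 ^ p.natDegree := by
      refine mul_left_cancel₀ hlcne ?_
      rw [mul_one]
      linear_combination hlc
    have h2 : ((2 ^ (p.natDegree + 1) : ℕ) : ℂ) = ((1 : ℕ) : ℂ) := by
      push_cast
      rw [pow_succ]
      linear_combination -h1
    have h3 : (2 : ℕ) ^ (p.natDegree + 1) = 1 := Nat.cast_injective h2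
    have h4 : 1 < (2:ℕ) ^ (p.natDegree + 1) := Nat.one_lt_two_pow_iff.mpr (by omega)
    omega
  refine LinearMap.ext fun a => ?_
  apply emb_inj
  rw [hembT, hp0, zero_mul, LinearMap.zero_apply, map_zero]
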